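/- Let Δ ≥ 4 be even and N ≥ 2. Let G be any connected infinite Δ-regular graph obtained by the following construction: take N pairwise disjoint copies HL(1), …, HL(N) of the thick half line HL_Δ; for each i let V(i) be the set of Δ/2 first-column vertices of HL(i); for each pair i ≠ j identify t_{ij} = t_{ji} vertices of V(i) with t_{ij} vertices of V(j) (0 ≤ t_{ij} ≤ Δ/2); then add finitely many new vertices and finitely many new edges, all new edges incident only to first-column vertices and new vertices, so that every vertex of the resulting graph has degree Δ. Then the epidemic region of G equals that of the thick line: Ω_G = Ω_{L_Δ}. -/
import Mathlib


namespace Contagion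

open scoped BigOperators

/-- The three strategies in the contagion game. -/
inductive Strat
  | A | B | AB
deriving DecidableEq

/-- Pairwise payoff to a player using the first strategy against a neighbor
using the second strategy, in the contagion game with parameters `q, r`. -/
noncomputable def pairPayoff (q r : ℝ) : Strat → Strat → ℝ
  | .A, .A => 1 - q
  | .A, .B => 0
  | .A, .AB => 1 - q
  | .B, .A => 0
  | .B, .B => q
  | .B, .AB => q
  | .AB, .A => 1 - q - r
  | .AB, .B => q - r
  | .AB, .AB => max q (1 - q) - r

variable {V : Type*}

/-- Total payoff to vertex `v` for playing strategy `s` against profile `σ`. -/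
noncomputable def totalPayoff (G : SimpleGraph V) (q r : ℝ) (σ : V → Strat)
    (v : V) (s : Strat) : ℝ :=
  ∑ᶠ u ∈ G.neighborSet v, pairPayoff q r s (σ u)

/-- `s` is a best response of vertex `v` to the profile `σ`. -/
def IsBestResponse (G : SimpleGraph V) (q r : ℝ) (σ : V → Strat) (v : V) (s : Strat) : Prop :=
  ∀ s' : Strat, totalPayoff G q r σ v s' ≤ totalPayoff G q r σ v s

/-- Strategy `A` becomes epidemic in the contagion game `(G, q, r)`:
there are a finite initial set `S₀` (playing `A`, everybody else playing `B`) and a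
sequence `α` of vertices in which every vertex appears at least once, such that updating
at step `n` the vertex `α n` to a best response makes every vertex eventually adopt `A`. -/
def Epidemic (G : SimpleGraph V) (q r : ℝ) : Prop :=
  ∃ (S₀ : Set V) (α : ℕ → V) (σ : ℕ → V → Strat),
    S₀.Finite ∧
    Function.Surjective α ∧
    (∀ v ∈ S₀, σ 0 v = Strat.A) ∧
    (∀ v ∉ S₀, σ 0 v = Strat.B) ∧
    (∀ n, IsBestResponse G q r (σ n) (α n) (σ (n + 1) (α n))) ∧
    (∀ n v, v ≠ α n → σ (n + 1) v = σ n v) ∧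
    (∀ v, ∃ n, σ n v = Strat.A)

/-- The epidemic region `Ω_G ⊆ ℝ²` of `G`. -/
def epidemicRegion (G : SimpleGraph V) : Set (ℝ × ℝ) :=
  {p | 0 < p.1 ∧ p.1 < 1 ∧ 0 < p.2 ∧ Epidemic G p.1 p.2}

/-- `G` is `Δ`-regular: every vertex has exactly `Δ` neighbors. -/
def IsRegular (G : SimpleGraph V) (Δ : ℕ) : Prop :=
  ∀ v, (G.neighborSet v).ncard = Δ

/-- The number of neighbors of `v` lying in the set `S`. -/
noncomputable def degIn (G : SimpleGraph V) (v : V) (S : Set V) : ℕ :=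
  (G.neighborSet v ∩ S).ncard

/-- `RT Δ`: the infinite rooted tree in which the root (the empty list) has `Δ - 1`
children and every other vertex also has `Δ - 1` children (hence degree `Δ`). -/
def RT (Δ : ℕ) : SimpleGraph (List (Fin (Δ - 1))) :=
  SimpleGraph.fromRel (fun l l' => ∃ a : Fin (Δ - 1), l' = a :: l)

/-- `G` contains a subgraph isomorphic to `RT Δ`. -/
def HasRTCopy (Δ : ℕ) (G : SimpleGraph V) : Prop :=
  ∃ f : List (Fin (Δ - 1)) → V,
    Function.Injective f ∧ ∀ x y, (RT Δ).Adj x y → G.Adj (f x) (f y)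

/-- The thick half line `HL_Δ` (for even `Δ`), columns indexed by `ℕ` starting with the
first column `0`; `(k, i)` and `(l, j)` are adjacent exactly when `|k - l| = 1`. -/
def HL (Δ : ℕ) : SimpleGraph (ℕ × Fin (Δ / 2)) :=
  SimpleGraph.fromRel (fun x y => y.1 = x.1 + 1)

/-- The epidemic region of the infinite `Δ`-regular tree:
`{(q,r) : q,r > 0, r ≥ ((Δ-1)/Δ)q, q ≤ 1/Δ} ∪ {(q,r) : q,r > 0, 2q + Δr ≤ 1}`. -/
def treeRegion (Δ : ℕ) : Set (ℝ × ℝ) :=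
  {p | 0 < p.1 ∧ 0 < p.2 ∧ ((Δ : ℝ) - 1) / Δ * p.1 ≤ p.2 ∧ p.1 ≤ 1 / Δ} ∪
  {p | 0 < p.1 ∧ 0 < p.2 ∧ 2 * p.1 + Δ * p.2 ≤ 1}

/-- The epidemic region of the thick line `L_Δ`:
`{(q,r) : 0 < q ≤ 1/2, r ≥ q/2} ∪ {(q,r) : q,r > 0, r ≤ q/2, 2q + 2r ≤ 1}`. -/
def thickLineRegion : Set (ℝ × ℝ) :=
  {p | 0 < p.1 ∧ p.1 ≤ 1 / 2 ∧ p.1 / 2 ≤ p.2} ∪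
  {p | 0 < p.1 ∧ 0 < p.2 ∧ p.2 ≤ p.1 / 2 ∧ 2 * p.1 + 2 * p.2 ≤ 1}

/-- `(SAB, SB)` is a blocking structure for the contagion game `(G, q, r)`
on a `Δ`-regular graph `G`. -/
def IsBlockingStructure (G : SimpleGraph V) (Δ : ℕ) (q r : ℝ) (SAB SB : Set V) : Prop :=
  Disjoint SAB SB ∧ (SAB.Nonempty ∨ SB.Nonempty) ∧
  (∀ v ∈ SAB, r / q * Δ < (degIn G v SB : ℝ)) ∧
  ∀ v ∈ SB,
    (1 - q - r) * Δ < (1 - q) * (degIn G v SB : ℝ) + min q (1 - q) * (degIn G v SAB : ℝ) ∧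
    (1 - q) * Δ < (degIn G v SB : ℝ) + q * (degIn G v SAB : ℝ)

/-- The two strategies of the `A`-`B` coordination game. -/
inductive CStrat
  | A | B
deriving DecidableEq

/-- Pairwise payoff in the `A`-`B` coordination game `(G, q)`. -/
noncomputable def cPairPayoff (q : ℝ) : CStrat → CStrat → ℝ
  | .A, .A => 1 - q
  | .A, .B => 0
  | .B, .A => 0
  | .B, .B => q

/-- Total payoff to `v` for playing `s` against profile `σ` in the coordination game. -/
noncomputable def cTotalPayoff (G : SimpleGraph V) (q : ℝ) (σ : V → CStrat)
    (v : V) (s : CStrat) : ℝ :=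
  ∑ᶠ u ∈ G.neighborSet v, cPairPayoff q s (σ u)

/-- `s` is a best response of `v` to `σ` in the coordination game. -/
def CIsBestResponse (G : SimpleGraph V) (q : ℝ) (σ : V → CStrat) (v : V) (s : CStrat) : Prop :=
  ∀ s' : CStrat, cTotalPayoff G q σ v s' ≤ cTotalPayoff G q σ v s

/-- Strategy `A` becomes epidemic in the coordination game `(G, q)` starting from the
initial set `S₀`. -/
def CoordEpidemicFrom (G : SimpleGraph V) (q : ℝ) (S₀ : Set V) : Prop :=
  ∃ (α : ℕ → V) (σ : ℕ → V → CStrat),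
    Function.Surjective α ∧
    (∀ v ∈ S₀, σ 0 v = CStrat.A) ∧
    (∀ v ∉ S₀, σ 0 v = CStrat.B) ∧
    (∀ n, CIsBestResponse G q (σ n) (α n) (σ (n + 1) (α n))) ∧
    (∀ n v, v ≠ α n → σ (n + 1) v = σ n v) ∧
    (∀ v, ∃ n, σ n v = CStrat.A)

/-- Strategy `A` becomes epidemic in the coordination game `(G, q)`. -/
def CoordEpidemic (G : SimpleGraph V) (q : ℝ) : Prop :=
  ∃ S₀ : Set V, S₀.Finite ∧ CoordEpidemicFrom G q S₀

/-! ### Auxiliary machinery -/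

section Aux

variable {V : Type*}

lemma hl_adj_succ (Δ : ℕ) (k : ℕ) (i j : Fin (Δ/2)) :
    (HL Δ).Adj (k, i) (k+1, j) := by
  rw [HL, SimpleGraph.fromRel_adj]
  refine ⟨?_, Or.inl rfl⟩
  intro h
  have := congrArg Prod.fst h
  simp at this

lemma hl_adj_pred (Δ : ℕ) (k : ℕ) (hk : 1 ≤ k) (i j : Fin (Δ/2)) :
    (HL Δ).Adj (k, i) (k-1, j) := by
  rw [HL, SimpleGraph.fromRel_adj]
  refine ⟨?_, Or.inr ?_⟩
  · intro h
    have := congrArg Prod.fst h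
    simp only at this
    omega
  · show (k, i).1 = (k-1, j).1 + 1
    simp only
    omega

lemma nbhd_finite {Δ : ℕ} (hΔ : 0 < Δ) {G : SimpleGraph V} (hReg : IsRegular G Δ) (v : V) :
    (G.neighborSet v).Finite := by
  by_contra h
  have h2 : (G.neighborSet v).Infinite := h
  have := h2.ncard
  rw [hReg v] at this
  omega

variable {Δ N : ℕ}

variable [DecidableEq V]

set_option linter.unusedSectionVars false

/-- The finite set of vertices in column `k` of copy `m`. -/
noncomputable def colF (φ : Fin N → (ℕ × Fin (Δ / 2)) → V) (m : Fin N) (k : ℕ) : Finset V :=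
  Finset.image (fun i : Fin (Δ/2) => φ m (k, i)) Finset.univ

lemma mem_colF {φ : Fin N → (ℕ × Fin (Δ / 2)) → V} {m : Fin N} {k : ℕ} {u : V} :
    u ∈ colF φ m k ↔ ∃ i, φ m (k, i) = u := by
  simp [colF]

lemma colF_disj {φ : Fin N → (ℕ × Fin (Δ / 2)) → V}
    (hinj : ∀ m, Function.Injective (φ m)) (m : Fin N) {k l : ℕ} (hkl : k ≠ l) :
    Disjoint (colF φ m k) (colF φ m l) := by
  classical
  rw [Finset.disjoint_left]
  intro u hu hu'
  rcases mem_colF.mp hu with ⟨i, hi⟩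
  rcases mem_colF.mp hu' with ⟨j, hj⟩
  have := hinj m (hi.trans hj.symm)
  exact hkl (congrArg Prod.fst this)

lemma colF_card {φ : Fin N → (ℕ × Fin (Δ / 2)) → V}
    (hinj : ∀ m, Function.Injective (φ m)) (m : Fin N) (k : ℕ) :
    (colF φ m k).card = Δ / 2 := by
  rw [colF]
  rw [Finset.card_image_of_injective _ (fun i j h => by
    have := hinj m h
    exact (Prod.ext_iff.mp this).2)]
  simp [Finset.card_univ]

lemma nbr_eq {G : SimpleGraph V} (hΔ : 4 ≤ Δ) (hEven : Even Δ) (hReg : IsRegular G Δ)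
    {φ : Fin N → (ℕ × Fin (Δ / 2)) → V}
    (hinj : ∀ m, Function.Injective (φ m))
    (hsub : ∀ m x y, (HL Δ).Adj x y → G.Adj (φ m x) (φ m y))
    (m : Fin N) (k : ℕ) (i : Fin (Δ/2)) (hk : 1 ≤ k) :
    G.neighborSet (φ m (k, i)) = ↑(colF φ m (k-1) ∪ colF φ m (k+1)) := by
  classical
  have hdisj : Disjoint (colF φ m (k-1)) (colF φ m (k+1)) := colF_disj hinj m (by omega)
  symm
  apply Set.eq_of_subset_of_ncard_le
  · intro u hu
    simp only [Finset.coe_union, Set.mem_union, Finset.mem_coe] at hu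
    rcases hu with hu | hu
    · rcases mem_colF.mp hu with ⟨j, hj⟩
      rw [← hj]
      exact hsub m _ _ (hl_adj_pred Δ k hk i j)
    · rcases mem_colF.mp hu with ⟨j, hj⟩
      rw [← hj]
      exact hsub m _ _ (hl_adj_succ Δ k i j)
  · rw [Set.ncard_coe_finset, Finset.card_union_of_disjoint hdisj, colF_card hinj,
      colF_card hinj, hReg]
    obtain ⟨c, hc⟩ := hEven
    omega
  · exact nbhd_finite (by omega) hReg _

lemma payoff_split {G : SimpleGraph V} (hΔ : 4 ≤ Δ) (hEven : Even Δ) (hReg : IsRegular G Δ)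
    {φ : Fin N → (ℕ × Fin (Δ / 2)) → V}
    (hinj : ∀ m, Function.Injective (φ m))
    (hsub : ∀ m x y, (HL Δ).Adj x y → G.Adj (φ m x) (φ m y))
    (q r : ℝ) (σ : V → Strat) (m : Fin N) (k : ℕ) (i : Fin (Δ/2)) (hk : 1 ≤ k) (s : Strat) :
    totalPayoff G q r σ (φ m (k, i)) s
      = (∑ j : Fin (Δ/2), pairPayoff q r s (σ (φ m (k-1, j))))
      + (∑ j : Fin (Δ/2), pairPayoff q r s (σ (φ m (k+1, j)))) := by
  classical
  have hdisj : Disjoint (colF φ m (k-1)) (colF φ m (k+1)) := colF_disj hinj m (by omega)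
  have hi : ∀ l : ℕ, ∀ x ∈ (Finset.univ : Finset (Fin (Δ/2))), ∀ y ∈ Finset.univ,
      φ m (l, x) = φ m (l, y) → x = y := by
    intro l x _ y _ h
    exact (Prod.ext_iff.mp (hinj m h)).2
  rw [totalPayoff, nbr_eq hΔ hEven hReg hinj hsub m k i hk, finsum_mem_coe_finset,
    Finset.sum_union hdisj, colF, colF]
  rw [Finset.sum_image (hi (k-1)), Finset.sum_image (hi (k+1))]

lemma totalPayoff_le {G : SimpleGraph V} {v : V} (hfin : (G.neighborSet v).Finite)
    {q r : ℝ} {σ : V → Strat} {s s' : Strat}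
    (h : ∀ u ∈ G.neighborSet v, pairPayoff q r s' (σ u) ≤ pairPayoff q r s (σ u)) :
    totalPayoff G q r σ v s' ≤ totalPayoff G q r σ v s := by
  classical
  rw [totalPayoff, totalPayoff, ← Set.Finite.coe_toFinset hfin, finsum_mem_coe_finset,
    finsum_mem_coe_finset]
  apply Finset.sum_le_sum
  intro u hu
  exact h u (hfin.mem_toFinset.mp hu)

/-- If all neighbours of `v` play `A` or `AB` and `q ≤ 1/2`, `r ≥ 0`, then `A` is a
best response for `v`. -/
lemma bestResponse_A_of_AB {Δ : ℕ} (hΔ : 0 < Δ) {G : SimpleGraph V} (hReg : IsRegular G Δ)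
    {q r : ℝ} (hq : q ≤ 1/2) (hr : 0 ≤ r) {σ : V → Strat} {v : V}
    (h : ∀ u ∈ G.neighborSet v, σ u = Strat.A ∨ σ u = Strat.AB) :
    IsBestResponse G q r σ v Strat.A := by
  have hm : max q (1-q) = 1 - q := max_eq_right (by linarith)
  intro s'
  apply totalPayoff_le (nbhd_finite hΔ hReg v)
  intro u hu
  rcases h u hu with h' | h' <;> rw [h'] <;> cases s' <;>
    simp only [pairPayoff, hm] <;> linarith

end Aux

section Construction

variable {V : Type*} {Δ N : ℕ}

lemma rep_unique {φ : Fin N → (ℕ × Fin (Δ / 2)) → V}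
    (hinj : ∀ m, Function.Injective (φ m))
    (hoverlap : ∀ m m', m ≠ m' → ∀ x y, φ m x = φ m' y → x.1 = 0 ∧ y.1 = 0)
    {m m' : Fin N} {k k' : ℕ} {i i' : Fin (Δ/2)} (hk : 1 ≤ k)
    (h : φ m (k, i) = φ m' (k', i')) : m = m' ∧ k = k' ∧ i = i' := by
  by_cases hmm : m = m'
  · subst hmm
    have := hinj m h
    have h1 := (Prod.ext_iff.mp this).1
    have h2 := (Prod.ext_iff.mp this).2
    exact ⟨rfl, h1, h2⟩
  · have := (hoverlap m m' hmm _ _ h).1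
    simp only at this
    omega

/-- The initial set: the new vertices together with all first-column vertices. -/
def S0set (Z : Set V) (φ : Fin N → (ℕ × Fin (Δ / 2)) → V) : Set V :=
  Z ∪ Set.range (fun p : Fin N × Fin (Δ/2) => φ p.1 (0, p.2))

lemma S0set_finite (Z : Set V) (hZfin : Z.Finite) (φ : Fin N → (ℕ × Fin (Δ / 2)) → V) :
    (S0set Z φ).Finite :=
  hZfin.union (Set.finite_range _)

lemma notMem_S0set {Z : Set V} {φ : Fin N → (ℕ × Fin (Δ / 2)) → V}
    (hinj : ∀ m, Function.Injective (φ m))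
    (hZdisj : ∀ m x, φ m x ∉ Z)
    (hoverlap : ∀ m m', m ≠ m' → ∀ x y, φ m x = φ m' y → x.1 = 0 ∧ y.1 = 0)
    {m : Fin N} {k : ℕ} {i : Fin (Δ/2)} (hk : 1 ≤ k) : φ m (k, i) ∉ S0set Z φ := by
  rintro (hZ | ⟨⟨m', i'⟩, hr⟩)
  · exact hZdisj m _ hZ
  · have := rep_unique hinj hoverlap hk hr.symm
    omega

/-- Number of vertices updated in each wave of a phase. -/
def PP (Δ N : ℕ) : ℕ := N * (Δ/2)

/-- Length of one phase of the update schedule. -/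
def LL (Δ N : ℕ) : ℕ := 2 * PP Δ N + 1

/-- Decoding of a position `j < PP` into a copy index and a row index. -/
def decod (Δ N : ℕ) (hW : 0 < Δ/2) (hN : 0 < N) (j : ℕ) : Fin N × Fin (Δ/2) :=
  (⟨min (j / (Δ/2)) (N-1), by omega⟩, ⟨j % (Δ/2), Nat.mod_lt _ hW⟩)

lemma decod_encode (hW : 0 < Δ/2) (hN : 0 < N) (m : Fin N) (i : Fin (Δ/2)) :
    decod Δ N hW hN (m.1 * (Δ/2) + i.1) = (m, i) := by
  have hdiv : (m.1 * (Δ/2) + i.1) / (Δ/2) = m.1 := by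
    rw [mul_comm, Nat.mul_add_div hW, Nat.div_eq_of_lt i.2, Nat.add_zero]
  have hmod : (m.1 * (Δ/2) + i.1) % (Δ/2) = i.1 := by
    rw [mul_comm, Nat.mul_add_mod, Nat.mod_eq_of_lt i.2]
  have hm : m.1 ≤ N - 1 := by have := m.2; omega
  rw [decod]
  ext
  · simp [hdiv, hm, Nat.min_eq_left]
  · simp [hmod]

lemma encode_decod (hW : 0 < Δ/2) (hN : 0 < N) {j : ℕ} (hj : j < PP Δ N) :
    (decod Δ N hW hN j).1.1 * (Δ/2) + (decod Δ N hW hN j).2.1 = j := by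
  have hdm : j / (Δ/2) ≤ N - 1 := by
    have : j / (Δ/2) < N := Nat.div_lt_of_lt_mul (by rw [mul_comm]; exact hj)
    omega
  rw [decod]
  simp only [Nat.min_eq_left hdm]
  exact Nat.div_add_mod' j (Δ/2)

/-- Step at which a vertex in column `k ≥ 1` receives its first (wave) update. -/
def t1 (Δ N : ℕ) (m : Fin N) (k : ℕ) (i : Fin (Δ/2)) : ℕ :=
  (k-1) * LL Δ N + (m.1 * (Δ/2) + i.1)

/-- Step at which a vertex in column `k ≥ 1` receives its second (consolidating) update. -/
def t2 (Δ N : ℕ) (m : Fin N) (k : ℕ) (i : Fin (Δ/2)) : ℕ :=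
  k * LL Δ N + PP Δ N + (m.1 * (Δ/2) + i.1)

/-- The update schedule. -/
noncomputable def alphaSeq (φ : Fin N → (ℕ × Fin (Δ / 2)) → V)
    (hW : 0 < Δ/2) (hN : 0 < N) (e : ℕ → V) : ℕ → V := fun n =>
  let b := n / LL Δ N
  let j := n % LL Δ N
  if j < PP Δ N then
    φ (decod Δ N hW hN j).1 (b+1, (decod Δ N hW hN j).2)
  else if j < 2 * PP Δ N then
    φ (decod Δ N hW hN (j - PP Δ N)).1 (b, (decod Δ N hW hN (j - PP Δ N)).2)
  else e b

/-- The profile sequence: the initial set always plays `A`; a column vertex plays `B` before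
its first update, the wave strategy `w` between its two updates, and `A` after the second. -/
noncomputable def sigmaSeq (φ : Fin N → (ℕ × Fin (Δ / 2)) → V)
    (S₀ : Set V) (w : Strat) : ℕ → V → Strat := fun n v =>
  letI : ∀ p : Prop, Decidable p := fun p => Classical.propDecidable p
  if v ∈ S₀ then Strat.A
  else if ∃ m k i, 1 ≤ k ∧ v = φ m (k, i) ∧ t2 Δ N m k i < n then Strat.A
  else if ∃ m k i, 1 ≤ k ∧ v = φ m (k, i) ∧ t1 Δ N m k i < n then w
  else Strat.B

lemma pos_lt_PP (hN : 0 < N) (m : Fin N) (i : Fin (Δ/2)) : m.1 * (Δ/2) + i.1 < PP Δ N := by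
  have hm := m.2
  have hi := i.2
  rw [PP]
  calc m.1 * (Δ/2) + i.1 < m.1 * (Δ/2) + (Δ/2) := by omega
  _ = (m.1 + 1) * (Δ/2) := by ring
  _ ≤ N * (Δ/2) := Nat.mul_le_mul_right _ (by omega)

lemma divmod_LL (hW : 0 < Δ/2) {a b : ℕ} (hb : b < LL Δ N) :
    (a * LL Δ N + b) / LL Δ N = a ∧ (a * LL Δ N + b) % LL Δ N = b := by
  constructor
  · rw [mul_comm, Nat.mul_add_div (show 0 < LL Δ N by rw [LL]; omega), Nat.div_eq_of_lt hb, Nat.add_zero]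
  · rw [mul_comm, Nat.mul_add_mod, Nat.mod_eq_of_lt hb]

/-- Evaluation of `sigmaSeq` at a column vertex with `k ≥ 1`. -/
lemma sigmaSeq_eval {Z : Set V} {φ : Fin N → (ℕ × Fin (Δ / 2)) → V}
    (hinj : ∀ m, Function.Injective (φ m))
    (hZdisj : ∀ m x, φ m x ∉ Z)
    (hoverlap : ∀ m m', m ≠ m' → ∀ x y, φ m x = φ m' y → x.1 = 0 ∧ y.1 = 0)
    (w : Strat) (n : ℕ) {m : Fin N} {k : ℕ} {i : Fin (Δ/2)} (hk : 1 ≤ k) :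
    sigmaSeq φ (S0set Z φ) w n (φ m (k, i))
      = if t2 Δ N m k i < n then Strat.A
        else if t1 Δ N m k i < n then w else Strat.B := by
  rw [sigmaSeq]
  simp only [notMem_S0set hinj hZdisj hoverlap hk, if_false]
  by_cases h2 : t2 Δ N m k i < n
  · rw [if_pos, if_pos h2]
    exact ⟨m, k, i, hk, rfl, h2⟩
  · rw [if_neg, if_neg h2]
    swap
    · rintro ⟨m', k', i', hk', he, ht⟩
      obtain ⟨rfl, rfl, rfl⟩ := rep_unique hinj hoverlap hk he
      exact h2 ht
    by_cases h1 : t1 Δ N m k i < n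
    · rw [if_pos, if_pos h1]
      exact ⟨m, k, i, hk, rfl, h1⟩
    · rw [if_neg, if_neg h1]
      rintro ⟨m', k', i', hk', he, ht⟩
      obtain ⟨rfl, rfl, rfl⟩ := rep_unique hinj hoverlap hk he
      exact h1 ht

end Construction
section Positive

variable {V : Type*}

lemma epidemic_construction {Δ N : ℕ} (hΔ : 4 ≤ Δ) (hEven : Even Δ) (hN : 2 ≤ N)
    (G : SimpleGraph V) (hReg : IsRegular G Δ)
    (Z : Set V) (hZfin : Z.Finite)
    (φ : Fin N → (ℕ × Fin (Δ / 2)) → V)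
    (hinj : ∀ m, Function.Injective (φ m))
    (hZdisj : ∀ m x, φ m x ∉ Z)
    (hoverlap : ∀ m m', m ≠ m' → ∀ x y, φ m x = φ m' y → x.1 = 0 ∧ y.1 = 0)
    (hsub : ∀ m x y, (HL Δ).Adj x y → G.Adj (φ m x) (φ m y))
    (hcover : ∀ v : V, v ∈ Z ∨ ∃ m x, φ m x = v)
    (hedges : ∀ u v : V, G.Adj u v →
      (∃ m x y, (HL Δ).Adj x y ∧ u = φ m x ∧ v = φ m y) ∨
      ((u ∈ Z ∨ ∃ m i, u = φ m (0, i)) ∧ (v ∈ Z ∨ ∃ m i, v = φ m (0, i))))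
    (q r : ℝ) (hq0 : 0 < q) (hq12 : q ≤ 1/2) (hr0 : 0 < r)
    (w : Strat) (hwAB : w = Strat.A ∨ w = Strat.AB)
    (hFIRST : ∀ s₁, (s₁ = Strat.A ∨ s₁ = w) → ∀ s',
      pairPayoff q r s' s₁ + pairPayoff q r s' Strat.B
        ≤ pairPayoff q r w s₁ + pairPayoff q r w Strat.B) :
    Epidemic G q r := by
  classical
  have hW : 0 < Δ/2 := by omega
  have hN0 : 0 < N := by omega
  have hfin : (S0set Z φ).Finite := S0set_finite Z hZfin φ
  have hne : (S0set Z φ).Nonempty :=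
    ⟨φ ⟨0, hN0⟩ (0, ⟨0, hW⟩), Or.inr ⟨(⟨0, hN0⟩, ⟨0, hW⟩), rfl⟩⟩
  obtain ⟨e, he⟩ := hfin.countable.exists_eq_range hne
  have hP0 : 0 < PP Δ N := Nat.mul_pos hN0 hW
  have hLP : LL Δ N = 2 * PP Δ N + 1 := rfl
  have hmulsucc : ∀ a : ℕ, (a+1) * LL Δ N = a * LL Δ N + LL Δ N := fun a => Nat.succ_mul a _
  -- evaluation of the profile at column vertices
  have hev : ∀ n (m : Fin N) (k : ℕ) (i : Fin (Δ/2)), 1 ≤ k →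
      sigmaSeq φ (S0set Z φ) w n (φ m (k, i))
        = if t2 Δ N m k i < n then Strat.A
          else if t1 Δ N m k i < n then w else Strat.B :=
    fun n m k i hk => sigmaSeq_eval hinj hZdisj hoverlap w n hk
  have hS0A : ∀ n v, v ∈ S0set Z φ → sigmaSeq φ (S0set Z φ) w n v = Strat.A := by
    intro n v hv
    rw [sigmaSeq, if_pos hv]
  have ht1e : ∀ (m : Fin N) (k : ℕ) (i : Fin (Δ/2)),
      t1 Δ N m (k+1) i = k * LL Δ N + (m.1 * (Δ/2) + i.1) := by
    intro m k i
    rw [t1, Nat.add_sub_cancel]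
  have ht2e : ∀ (m : Fin N) (k : ℕ) (i : Fin (Δ/2)),
      t2 Δ N m k i = k * LL Δ N + PP Δ N + (m.1 * (Δ/2) + i.1) := fun _ _ _ => rfl
  -- the schedule hits every column vertex at its two designated steps
  have hα1 : ∀ (m : Fin N) (k : ℕ) (i : Fin (Δ/2)),
      alphaSeq φ hW hN0 e (t1 Δ N m (k+1) i) = φ m (k+1, i) := by
    intro m k i
    have hpos : m.1 * (Δ/2) + i.1 < PP Δ N := pos_lt_PP hN0 m i
    have hdm := divmod_LL (Δ := Δ) (N := N) hW
      (a := k) (b := m.1 * (Δ/2) + i.1) (by omega)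
    rw [ht1e, alphaSeq]
    simp only [hdm.1, hdm.2, if_pos hpos, decod_encode hW hN0 m i]
  have hα2 : ∀ (m : Fin N) (k : ℕ) (i : Fin (Δ/2)), 1 ≤ k →
      alphaSeq φ hW hN0 e (t2 Δ N m k i) = φ m (k, i) := by
    intro m k i hk
    have hpos : m.1 * (Δ/2) + i.1 < PP Δ N := pos_lt_PP hN0 m i
    have hre : t2 Δ N m k i = k * LL Δ N + (PP Δ N + (m.1 * (Δ/2) + i.1)) := by
      rw [ht2e]; omega
    have hdm := divmod_LL (Δ := Δ) (N := N) hW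
      (a := k) (b := PP Δ N + (m.1 * (Δ/2) + i.1)) (by omega)
    rw [hre, alphaSeq]
    simp only [hdm.1, hdm.2]
    rw [if_neg (by omega), if_pos (by omega), Nat.add_sub_cancel_left,
      decod_encode hW hN0 m i]
  -- neighbours of initial vertices are always playing A or AB after step P
  have hS0nbrs : ∀ v ∈ S0set Z φ, ∀ n, PP Δ N ≤ n →
      ∀ u ∈ G.neighborSet v, sigmaSeq φ (S0set Z φ) w n u = Strat.A ∨
        sigmaSeq φ (S0set Z φ) w n u = Strat.AB := by
    intro v hv n hn u hu
    rcases hedges v u hu with ⟨m₁, x, y, hxy, hvx, huy⟩ | ⟨_, h2⟩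
    · obtain ⟨x1, x2⟩ := x
      have hx0 : x1 = 0 := by
        rcases hv with hZ | ⟨⟨m₂, i₂⟩, hr2⟩
        · exact absurd (hvx ▸ hZ) (hZdisj m₁ _)
        · by_contra h0
          have := rep_unique hinj hoverlap (k := x1) (by omega) (hvx ▸ hr2).symm
          omega
      obtain ⟨y1, y2⟩ := y
      have hy1 : y1 = 1 := by
        rw [HL, SimpleGraph.fromRel_adj] at hxy
        rcases hxy.2 with h | h
        · simpa [hx0] using h
        · simp only [hx0] at h; omega
      subst hy1 huy
      rw [hev n m₁ 1 y2 le_rfl]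
      have ht1 : t1 Δ N m₁ 1 y2 < n := by
        have := pos_lt_PP hN0 m₁ y2
        rw [t1]
        simp only [Nat.sub_self, Nat.zero_mul, Nat.zero_add]
        omega
      by_cases h1 : t2 Δ N m₁ 1 y2 < n
      · rw [if_pos h1]; exact Or.inl rfl
      · rw [if_neg h1, if_pos ht1]
        rcases hwAB with rfl | rfl
        · exact Or.inl rfl
        · exact Or.inr rfl
    · left
      apply hS0A
      rcases h2 with hZ | ⟨m, i, rfl⟩
      · exact Or.inl hZ
      · exact Or.inr ⟨(m, i), rfl⟩
  -- uniform-column best response for the wave update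
  have hsum : ∀ (σ' : V → Strat) (s : Strat) (m : Fin N) (l : ℕ) (c : Strat),
      (∀ jj : Fin (Δ/2), σ' (φ m (l, jj)) = c) →
      (∑ jj : Fin (Δ/2), pairPayoff q r s (σ' (φ m (l, jj))))
        = ((Δ/2 : ℕ) : ℝ) * pairPayoff q r s c := by
    intro σ' s m l c hc
    rw [Finset.sum_congr rfl (fun jj _ => by rw [hc jj]), Finset.sum_const,
      Finset.card_univ, Fintype.card_fin, nsmul_eq_mul]
  have hBRfirst : ∀ (σ' : V → Strat) (m : Fin N) (k : ℕ) (i : Fin (Δ/2)) (s₁ : Strat),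
      1 ≤ k → (s₁ = Strat.A ∨ s₁ = w) →
      (∀ jj : Fin (Δ/2), σ' (φ m (k-1, jj)) = s₁) →
      (∀ jj : Fin (Δ/2), σ' (φ m (k+1, jj)) = Strat.B) →
      IsBestResponse G q r σ' (φ m (k, i)) w := by
    intro σ' m k i s₁ hk hs₁ hcol1 hcol2 s'
    rw [payoff_split hΔ hEven hReg hinj hsub q r σ' m k i hk s',
      payoff_split hΔ hEven hReg hinj hsub q r σ' m k i hk w,
      hsum σ' s' m (k-1) s₁ hcol1, hsum σ' s' m (k+1) Strat.B hcol2,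
      hsum σ' w m (k-1) s₁ hcol1, hsum σ' w m (k+1) Strat.B hcol2]
    have h := hFIRST s₁ hs₁ s'
    have hc : (0:ℝ) ≤ ((Δ/2 : ℕ) : ℝ) := Nat.cast_nonneg _
    nlinarith
  -- assemble the epidemic data
  refine ⟨S0set Z φ, alphaSeq φ hW hN0 e, sigmaSeq φ (S0set Z φ) w, hfin, ?_, ?_, ?_, ?_, ?_, ?_⟩
  · -- surjectivity
    intro v
    rcases hcover v with hZ | ⟨m, ⟨k, i⟩, rfl⟩
    · have hv : v ∈ S0set Z φ := Or.inl hZ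
      rw [he] at hv
      obtain ⟨b, rfl⟩ := hv
      refine ⟨b * LL Δ N + 2 * PP Δ N, ?_⟩
      have hdm := divmod_LL (Δ := Δ) (N := N) hW (a := b) (b := 2 * PP Δ N) (by omega)
      rw [alphaSeq]
      simp only [hdm.1, hdm.2]
      rw [if_neg (by omega), if_neg (by omega)]
    · match k with
      | 0 =>
        have hv : φ m (0, i) ∈ S0set Z φ := Or.inr ⟨(m, i), rfl⟩
        rw [he] at hv
        obtain ⟨b, hb⟩ := hv
        refine ⟨b * LL Δ N + 2 * PP Δ N, ?_⟩
        have hdm := divmod_LL (Δ := Δ) (N := N) hW (a := b) (b := 2 * PP Δ N) (by omega)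
        rw [alphaSeq]
        simp only [hdm.1, hdm.2]
        rw [if_neg (by omega), if_neg (by omega)]
        exact hb
      | k + 1 => exact ⟨t1 Δ N m (k+1) i, hα1 m k i⟩
  · -- initial profile on S₀
    intro v hv
    exact hS0A 0 v hv
  · -- initial profile off S₀
    intro v hv
    rw [sigmaSeq, if_neg hv, if_neg, if_neg]
    · rintro ⟨m, k, i, hk, rfl, ht⟩
      omega
    · rintro ⟨m, k, i, hk, rfl, ht⟩
      omega
  · -- best responses
    intro n
    obtain ⟨b, j, rfl, hjL⟩ : ∃ b j, n = b * LL Δ N + j ∧ j < LL Δ N :=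
      ⟨n / LL Δ N, n % LL Δ N, (Nat.div_add_mod' n _).symm, Nat.mod_lt _ (by omega)⟩
    have hdm := divmod_LL (Δ := Δ) (N := N) hW (a := b) (b := j) hjL
    by_cases hj1 : j < PP Δ N
    · -- wave update of column b+1
      set md := (decod Δ N hW hN0 j).1 with hmd
      set idd := (decod Δ N hW hN0 j).2 with hidd
      have henc : md.1 * (Δ/2) + idd.1 = j := encode_decod hW hN0 hj1
      have hαn : alphaSeq φ hW hN0 e (b * LL Δ N + j) = φ md (b+1, idd) := by
        rw [alphaSeq]
        simp only [hdm.1, hdm.2]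
        rw [if_pos hj1]
      rw [hαn]
      have hnew : sigmaSeq φ (S0set Z φ) w (b * LL Δ N + j + 1) (φ md (b+1, idd))
          = w := by
        rw [hev _ md (b+1) idd (by omega), ht2e, ht1e, henc, hmulsucc]
        rw [if_neg (by omega), if_pos (by omega)]
      rw [hnew]
      have hcol2 : ∀ jj : Fin (Δ/2),
          sigmaSeq φ (S0set Z φ) w (b * LL Δ N + j) (φ md (b+1+1, jj)) = Strat.B := by
        intro jj
        rw [hev _ md (b+2) jj (by omega), ht2e, ht1e, hmulsucc, hmulsucc]
        have hpos := pos_lt_PP hN0 md jj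
        rw [if_neg (by omega), if_neg (by omega)]
      rcases Nat.eq_zero_or_pos b with rfl | hb
      · -- behind is the first column, all playing A
        refine hBRfirst _ md 1 idd Strat.A le_rfl (Or.inl rfl) ?_ ?_
        · intro jj
          exact hS0A _ _ (Or.inr ⟨(md, jj), rfl⟩)
        · intro jj
          exact hcol2 jj
      · -- behind is column b, all playing w
        have hcol1 : ∀ jj : Fin (Δ/2),
            sigmaSeq φ (S0set Z φ) w (b * LL Δ N + j) (φ md (b, jj)) = w := by
          intro jj
          rw [hev _ md b jj hb, ht2e, t1]
          have hpos := pos_lt_PP hN0 md jj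
          have hbm : b * LL Δ N = (b-1) * LL Δ N + LL Δ N := by
            conv_lhs => rw [show b = (b-1)+1 by omega]
            exact hmulsucc _
          rw [if_neg (by omega), if_pos (by omega)]
        exact hBRfirst _ md (b+1) idd w (by omega) (Or.inr rfl)
          (fun jj => hcol1 jj) hcol2
    · by_cases hj2 : j < 2 * PP Δ N
      · -- consolidating update of column b
        set j' := j - PP Δ N with hj'def
        have hj' : j' < PP Δ N := by omega
        set md := (decod Δ N hW hN0 j').1 with hmd
        set idd := (decod Δ N hW hN0 j').2 with hidd
        have henc : md.1 * (Δ/2) + idd.1 = j' := encode_decod hW hN0 hj'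
        have hαn : alphaSeq φ hW hN0 e (b * LL Δ N + j) = φ md (b, idd) := by
          rw [alphaSeq]
          simp only [hdm.1, hdm.2]
          rw [if_neg hj1, if_pos hj2]
        rw [hαn]
        rcases Nat.eq_zero_or_pos b with rfl | hb
        · -- a first-column vertex: all neighbours play A or AB, best response A
          have hv : φ md (0, idd) ∈ S0set Z φ := Or.inr ⟨(md, idd), rfl⟩
          rw [hS0A _ _ hv]
          exact bestResponse_A_of_AB (by omega) hReg hq12 hr0.le
            (hS0nbrs _ hv _ (by omega))
        · -- a column vertex getting its second update
          have hnew : sigmaSeq φ (S0set Z φ) w (b * LL Δ N + j + 1) (φ md (b, idd))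
              = Strat.A := by
            rw [hev _ md b idd hb, ht2e, if_pos (by omega)]
          rw [hnew]
          apply bestResponse_A_of_AB (by omega) hReg hq12 hr0.le
          intro u hu
          rw [nbr_eq hΔ hEven hReg hinj hsub md b idd hb] at hu
          simp only [Finset.coe_union, Set.mem_union, Finset.mem_coe] at hu
          rcases hu with hu | hu
          · -- behind: all A
            left
            rcases mem_colF.mp hu with ⟨jj, rfl⟩
            rcases Nat.eq_zero_or_pos (b-1) with hb1 | hb1
            · rw [hb1]
              exact hS0A _ _ (Or.inr ⟨(md, jj), rfl⟩)
            · rw [hev _ md (b-1) jj hb1, ht2e]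
              have hpos := pos_lt_PP hN0 md jj
              have hbm : b * LL Δ N = (b-1) * LL Δ N + LL Δ N := by
                conv_lhs => rw [show b = (b-1)+1 by omega]
                exact hmulsucc _
              rw [if_pos (by omega)]
          · -- ahead: all w or A
            rcases mem_colF.mp hu with ⟨jj, rfl⟩
            rw [hev _ md (b+1) jj (by omega), ht1e]
            have hpos := pos_lt_PP hN0 md jj
            by_cases h1 : t2 Δ N md (b+1) jj < b * LL Δ N + j
            · rw [if_pos h1]; exact Or.inl rfl
            · rw [if_neg h1, if_pos (by omega : b * LL Δ N + (md.1 * (Δ/2) + jj.1) < b * LL Δ N + j)]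
              rcases hwAB with rfl | rfl
              · exact Or.inl rfl
              · exact Or.inr rfl
      · -- update of a listed initial vertex
        have hαn : alphaSeq φ hW hN0 e (b * LL Δ N + j) = e b := by
          rw [alphaSeq]
          simp only [hdm.1, hdm.2]
          rw [if_neg hj1, if_neg hj2]
        have hv : e b ∈ S0set Z φ := by
          rw [he]
          exact ⟨b, rfl⟩
        rw [hαn, hS0A _ _ hv]
        exact bestResponse_A_of_AB (by omega) hReg hq12 hr0.le
          (hS0nbrs _ hv _ (by omega))
  · -- only the scheduled vertex changes
    intro n v hne'
    by_cases hv : v ∈ S0set Z φ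
    · rw [hS0A _ _ hv, hS0A _ _ hv]
    · by_cases hrep : ∃ (m : Fin N) (k : ℕ) (i : Fin (Δ/2)), 1 ≤ k ∧ v = φ m (k, i)
      · obtain ⟨m, k, i, hk, rfl⟩ := hrep
        obtain ⟨k, rfl⟩ : ∃ k', k = k' + 1 := ⟨k - 1, by omega⟩
        have hn1 : n ≠ t1 Δ N m (k+1) i := by
          intro h
          exact hne' (by rw [h, hα1 m k i])
        have hn2 : n ≠ t2 Δ N m (k+1) i := by
          intro h
          exact hne' (by rw [h, hα2 m (k+1) i (by omega)])
        rw [hev _ m (k+1) i (by omega), hev _ m (k+1) i (by omega)]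
        have e2 : (t2 Δ N m (k+1) i < n + 1) ↔ (t2 Δ N m (k+1) i < n) := by omega
        have e1 : (t1 Δ N m (k+1) i < n + 1) ↔ (t1 Δ N m (k+1) i < n) := by omega
        simp only [e1, e2]
      · have hB : ∀ nn, sigmaSeq φ (S0set Z φ) w nn v = Strat.B := by
          intro nn
          rw [sigmaSeq, if_neg hv, if_neg, if_neg]
          · rintro ⟨m, k, i, hk, rfl, ht⟩
            exact hrep ⟨m, k, i, hk, rfl⟩
          · rintro ⟨m, k, i, hk, rfl, ht⟩
            exact hrep ⟨m, k, i, hk, rfl⟩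
        rw [hB, hB]
  · -- everybody eventually plays A
    intro v
    rcases hcover v with hZ | ⟨m, ⟨k, i⟩, rfl⟩
    · exact ⟨0, hS0A 0 v (Or.inl hZ)⟩
    · match k with
      | 0 => exact ⟨0, hS0A 0 _ (Or.inr ⟨(m, i), rfl⟩)⟩
      | k + 1 =>
        refine ⟨t2 Δ N m (k+1) i + 1, ?_⟩
        rw [hev _ m (k+1) i (by omega), if_pos (by omega)]

end Positive
section Negative

variable {V : Type*}

lemma sum_fin_const {n : ℕ} (g : Fin n → ℝ) (c : ℝ) (h : ∀ j, g j = c) :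
    ∑ j, g j = (n : ℝ) * c := by
  rw [Finset.sum_congr rfl (fun j _ => h j), Finset.sum_const, Finset.card_univ,
    Fintype.card_fin, nsmul_eq_mul]

lemma sum_fin_le {n : ℕ} (g : Fin n → ℝ) (c : ℝ) (h : ∀ j, g j ≤ c) :
    ∑ j, g j ≤ (n : ℝ) * c := by
  calc ∑ j, g j ≤ ∑ _j : Fin n, c := Finset.sum_le_sum (fun j _ => h j)
  _ = (n : ℝ) * c := sum_fin_const _ c (fun _ => rfl)

lemma sum_fin_ge {n : ℕ} (g : Fin n → ℝ) (c : ℝ) (h : ∀ j, c ≤ g j) :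
    (n : ℝ) * c ≤ ∑ j, g j := by
  calc (n : ℝ) * c = ∑ _j : Fin n, c := (sum_fin_const _ c (fun _ => rfl)).symm
  _ ≤ ∑ j, g j := Finset.sum_le_sum (fun j _ => h j)

lemma sum_fin_le_sum_add {n : ℕ} (f g : Fin n → ℝ) (c : ℝ) (h : ∀ j, f j ≤ g j + c) :
    ∑ j, f j ≤ (∑ j, g j) + (n : ℝ) * c := by
  calc ∑ j, f j ≤ ∑ j, (g j + c) := Finset.sum_le_sum (fun j _ => h j)
  _ = _ := by
    rw [Finset.sum_add_distrib]
    congr 1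
    exact sum_fin_const _ c (fun _ => rfl)

set_option maxHeartbeats 1000000 in
lemma not_epidemic_of_out {Δ N : ℕ} (hΔ : 4 ≤ Δ) (hEven : Even Δ) (hN : 2 ≤ N)
    (G : SimpleGraph V) (hReg : IsRegular G Δ)
    (φ : Fin N → (ℕ × Fin (Δ / 2)) → V)
    (hinj : ∀ m, Function.Injective (φ m))
    (hoverlap : ∀ m m', m ≠ m' → ∀ x y, φ m x = φ m' y → x.1 = 0 ∧ y.1 = 0)
    (hsub : ∀ m x y, (HL Δ).Adj x y → G.Adj (φ m x) (φ m y))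
    (q r : ℝ) (hq0 : 0 < q) (hq1 : q < 1) (hr0 : 0 < r)
    (hq13 : 1/3 < q) (h2q2r : 1 < 2*q + 2*r) (hsplit : 1/2 < q ∨ r < q/2) :
    ¬ Epidemic G q r := by
  classical
  rintro ⟨S₀, α, σ, hfin, hsurj, h0A, h0B, hbr, hstay, hall⟩
  have hW : 0 < Δ/2 := by omega
  have hN0 : 0 < N := by omega
  set Wr : ℝ := ((Δ/2 : ℕ) : ℝ) with hWrdef
  have hWr2 : (2:ℝ) ≤ Wr := by
    rw [hWrdef]
    exact_mod_cast (by omega : 2 ≤ Δ/2)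
  -- a column bound beyond which no initial vertex lives
  obtain ⟨k₀, hk₀, hout⟩ : ∃ k₀ : ℕ, 1 ≤ k₀ ∧
      ∀ (m : Fin N) (k : ℕ) (i : Fin (Δ/2)), k₀ ≤ k → φ m (k, i) ∉ S₀ := by
    have hfin2 : (⋃ m : Fin N,
        Prod.fst '' ((fun p : ℕ × Fin (Δ/2) => φ m p) ⁻¹' S₀)).Finite :=
      Set.finite_iUnion (fun m => ((hfin.preimage (hinj m).injOn).image _))
    obtain ⟨B₀, hB₀⟩ := hfin2.bddAbove
    refine ⟨B₀ + 1, by omega, ?_⟩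
    intro m k i hk hmem
    have hKk : k ∈ ⋃ m : Fin N,
        Prod.fst '' ((fun p : ℕ × Fin (Δ/2) => φ m p) ⁻¹' S₀) :=
      Set.mem_iUnion.mpr ⟨m, ⟨(k, i), hmem, rfl⟩⟩
    have := hB₀ hKk
    omega
  -- the invariant: columns ≥ k₀ never play A, columns > k₀ always play B
  have hInv : ∀ n (m : Fin N) (k : ℕ) (i : Fin (Δ/2)), k₀ ≤ k →
      σ n (φ m (k, i)) = Strat.B ∨ (k = k₀ ∧ σ n (φ m (k, i)) = Strat.AB) := by
    intro n
    induction n with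
    | zero => exact fun m k i hk => Or.inl (h0B _ (hout m k i hk))
    | succ n ih =>
      intro m k i hk
      by_cases hv : φ m (k, i) = α n
      · have hbrn := hbr n
        rw [← hv] at hbrn
        have hahead : ∀ jj : Fin (Δ/2), σ n (φ m (k+1, jj)) = Strat.B := by
          intro jj
          rcases ih m (k+1) jj (by omega) with h | ⟨h, _⟩
          · exact h
          · omega
        have PS := payoff_split hΔ hEven hReg hinj hsub q r (σ n) m k i (by omega)
        have hS2B : (∑ jj : Fin (Δ/2), pairPayoff q r Strat.B (σ n (φ m (k+1, jj))))
            = Wr * q := sum_fin_const _ q (fun jj => by rw [hahead jj]; rfl)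
        have hS2A : (∑ jj : Fin (Δ/2), pairPayoff q r Strat.A (σ n (φ m (k+1, jj))))
            = Wr * 0 := sum_fin_const _ 0 (fun jj => by rw [hahead jj]; rfl)
        have hS2AB : (∑ jj : Fin (Δ/2), pairPayoff q r Strat.AB (σ n (φ m (k+1, jj))))
            = Wr * (q - r) := sum_fin_const _ (q-r) (fun jj => by rw [hahead jj]; rfl)
        rcases Nat.lt_or_ge k₀ k with hkk | hkk
        · -- a column strictly beyond k₀ : the best response is B
          left
          have hbehind : ∀ jj : Fin (Δ/2), σ n (φ m (k-1, jj)) = Strat.B ∨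
              σ n (φ m (k-1, jj)) = Strat.AB := by
            intro jj
            rcases ih m (k-1) jj (by omega) with h | ⟨_, h⟩
            · exact Or.inl h
            · exact Or.inr h
          have hPB : totalPayoff G q r (σ n) (φ m (k, i)) Strat.B = Wr * q + Wr * q := by
            rw [PS Strat.B, hS2B]
            congr 1
            have hterm : ∀ jj : Fin (Δ/2),
                pairPayoff q r Strat.B (σ n (φ m (k-1, jj))) = q := by
              intro jj
              rcases hbehind jj with h | h <;> rw [h] <;> rfl
            exact sum_fin_const _ _ hterm
          have hPA : totalPayoff G q r (σ n) (φ m (k, i)) Strat.A ≤ Wr * (1-q) + Wr * 0 := by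
            rw [PS Strat.A, hS2A]
            have hterm : ∀ jj : Fin (Δ/2),
                pairPayoff q r Strat.A (σ n (φ m (k-1, jj))) ≤ 1 - q := by
              intro jj
              rcases hbehind jj with h | h <;> rw [h] <;> simp [pairPayoff] <;> linarith
            have := sum_fin_le _ _ hterm
            linarith
          have hPAB : totalPayoff G q r (σ n) (φ m (k, i)) Strat.AB
              ≤ Wr * (max q (1-q) - r) + Wr * (q - r) := by
            rw [PS Strat.AB, hS2AB]
            have hterm : ∀ jj : Fin (Δ/2),
                pairPayoff q r Strat.AB (σ n (φ m (k-1, jj))) ≤ max q (1-q) - r := by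
              intro jj
              rcases hbehind jj with h | h <;> rw [h] <;> simp [pairPayoff] <;>
                nlinarith [le_max_left q (1-q), le_max_right q (1-q)]
            have := sum_fin_le _ _ hterm
            linarith
          have hmax : max q (1-q) < q + 2*r := max_lt (by linarith) (by linarith)
          cases hcs : σ (n+1) (φ m (k, i)) with
          | A =>
            exfalso
            rw [hcs] at hbrn
            have := hbrn Strat.B
            nlinarith
          | B => rfl
          | AB =>
            exfalso
            rw [hcs] at hbrn
            have := hbrn Strat.B
            nlinarith
        · -- the column k₀ itself : the best response is never A
          have hkeq : k = k₀ := by omega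
          subst hkeq
          have hnotA : σ (n+1) (φ m (k, i)) ≠ Strat.A := by
            intro hA
            rw [hA] at hbrn
            rcases hsplit with hq2 | hr2
            · -- q > 1/2 : B beats A
              have hPA : totalPayoff G q r (σ n) (φ m (k, i)) Strat.A
                  ≤ Wr * (1-q) + Wr * 0 := by
                rw [PS Strat.A, hS2A]
                have hterm : ∀ jj : Fin (Δ/2),
                    pairPayoff q r Strat.A (σ n (φ m (k-1, jj))) ≤ 1 - q := by
                  intro jj
                  cases hx : σ n (φ m (k-1, jj)) <;> simp [pairPayoff] <;> linarith
                have := sum_fin_le _ _ hterm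
                linarith
              have hPB : Wr * 0 + Wr * q ≤ totalPayoff G q r (σ n) (φ m (k, i)) Strat.B := by
                rw [PS Strat.B, hS2B]
                have hterm : ∀ jj : Fin (Δ/2),
                    (0:ℝ) ≤ pairPayoff q r Strat.B (σ n (φ m (k-1, jj))) := by
                  intro jj
                  cases hx : σ n (φ m (k-1, jj)) <;> simp [pairPayoff] <;> linarith
                have := sum_fin_ge _ _ hterm
                linarith
              have := hbrn Strat.B
              nlinarith
            · -- r < q/2 : AB beats A
              have hPA : totalPayoff G q r (σ n) (φ m (k, i)) Strat.A
                  ≤ (∑ jj : Fin (Δ/2), pairPayoff q r Strat.AB (σ n (φ m (k-1, jj))))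
                    + Wr * r + Wr * 0 := by
                rw [PS Strat.A, hS2A]
                have hterm : ∀ jj : Fin (Δ/2),
                    pairPayoff q r Strat.A (σ n (φ m (k-1, jj)))
                      ≤ pairPayoff q r Strat.AB (σ n (φ m (k-1, jj))) + r := by
                  intro jj
                  cases hx : σ n (φ m (k-1, jj)) <;> simp [pairPayoff] <;>
                    nlinarith [le_max_left q (1-q), le_max_right q (1-q)]
                have := sum_fin_le_sum_add _ _ _ hterm
                linarith
              have hPAB : totalPayoff G q r (σ n) (φ m (k, i)) Strat.AB
                  = (∑ jj : Fin (Δ/2), pairPayoff q r Strat.AB (σ n (φ m (k-1, jj))))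
                    + Wr * (q - r) := by
                rw [PS Strat.AB, hS2AB]
              have := hbrn Strat.AB
              nlinarith
          cases hcs : σ (n+1) (φ m (k, i)) with
          | A => exact absurd hcs hnotA
          | B => exact Or.inl rfl
          | AB => exact Or.inr ⟨rfl, rfl⟩
      · rw [hstay n _ hv]
        exact ih m k i hk
  -- the vertex in column k₀ + 1 never plays A
  obtain ⟨n, hA⟩ := hall (φ ⟨0, hN0⟩ (k₀+1, ⟨0, hW⟩))
  rcases hInv n ⟨0, hN0⟩ (k₀+1) ⟨0, hW⟩ (by omega) with h | ⟨h, _⟩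
  · rw [hA] at h
    exact Strat.noConfusion h
  · omega

end Negative
/-- Let `Δ ≥ 4` be even and `N ≥ 2`.  Suppose the connected infinite
`Δ`-regular graph `G` is obtained from `N` copies of the thick half line `HL_Δ`
(embedded via `φ 0, …, φ (N-1)`) by identifying some first-column vertices of different
copies, adding a finite set `Z` of new vertices, and adding new edges only between
first-column/new vertices, in such a way that the result is `Δ`-regular.  Then
`Ω_G = Ω_{L_Δ}`. -/
theorem construction_region_eq_thickLine {V : Type*} (Δ N : ℕ) (hΔ : 4 ≤ Δ)
    (hEven : Even Δ) (hN : 2 ≤ N)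
    (G : SimpleGraph V) (hInf : Infinite V) (hConn : G.Connected) (hReg : IsRegular G Δ)
    (Z : Set V) (hZfin : Z.Finite)
    (φ : Fin N → (ℕ × Fin (Δ / 2)) → V)
    (hinj : ∀ m, Function.Injective (φ m))
    (hZdisj : ∀ m x, φ m x ∉ Z)
    (hoverlap : ∀ m m', m ≠ m' → ∀ x y, φ m x = φ m' y → x.1 = 0 ∧ y.1 = 0)
    (hsub : ∀ m x y, (HL Δ).Adj x y → G.Adj (φ m x) (φ m y))
    (hcover : ∀ v : V, v ∈ Z ∨ ∃ m x, φ m x = v)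
    (hedges : ∀ u v : V, G.Adj u v →
      (∃ m x y, (HL Δ).Adj x y ∧ u = φ m x ∧ v = φ m y) ∨
      ((u ∈ Z ∨ ∃ m i, u = φ m (0, i)) ∧ (v ∈ Z ∨ ∃ m i, v = φ m (0, i)))) :
    epidemicRegion G = thickLineRegion := by
  ext p
  obtain ⟨q, r⟩ := p
  simp only [epidemicRegion, Set.mem_setOf_eq]
  constructor
  · rintro ⟨hq0, hq1, hr0, hep⟩
    by_contra hout
    have hcases : (1/2 < q ∨ r < q/2) ∧ 1/3 < q ∧ 1 < 2*q + 2*r := by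
      simp only [thickLineRegion, Set.mem_union, Set.mem_setOf_eq, not_or] at hout
      obtain ⟨h1, h2⟩ := hout
      push_neg at h1 h2
      by_cases hq : q ≤ 1/2
      · have hr2 : r < q/2 := h1 hq0 hq
        have h2' : 1 < 2*q + 2*r := h2 hq0 hr0 (by linarith)
        exact ⟨Or.inr hr2, by linarith, h2'⟩
      · push_neg at hq
        exact ⟨Or.inl hq, by linarith, by linarith⟩
    exact not_epidemic_of_out hΔ hEven hN G hReg φ hinj hoverlap hsub q r hq0 hq1 hr0
      hcases.2.1 hcases.2.2 hcases.1 hep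
  · intro hmem
    simp only [thickLineRegion, Set.mem_union, Set.mem_setOf_eq] at hmem
    rcases hmem with ⟨hq0, hq12, hrq⟩ | ⟨hq0, hr0, hrq, h2q2r⟩
    · have hr0 : 0 < r := lt_of_lt_of_le (by linarith) hrq
      refine ⟨hq0, by linarith, hr0, ?_⟩
      refine epidemic_construction hΔ hEven hN G hReg Z hZfin φ hinj hZdisj hoverlap
        hsub hcover hedges q r hq0 hq12 hr0 Strat.A (Or.inl rfl) ?_
      intro s₁ hs₁ s'
      have hmax : max q (1-q) = 1-q := max_eq_right (by linarith)
      rcases hs₁ with rfl | rfl <;> cases s' <;> simp [pairPayoff, hmax] <;> linarith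
    · have hq12 : q ≤ 1/2 := by linarith
      refine ⟨hq0, by linarith, hr0, ?_⟩
      refine epidemic_construction hΔ hEven hN G hReg Z hZfin φ hinj hZdisj hoverlap
        hsub hcover hedges q r hq0 hq12 hr0 Strat.AB (Or.inr rfl) ?_
      intro s₁ hs₁ s'
      have hmax : max q (1-q) = 1-q := max_eq_right (by linarith)
      rcases hs₁ with rfl | rfl <;> cases s' <;> simp [pairPayoff, hmax] <;> linarith

end Contagion
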